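/- For every δ ∈ (0,1) there exists δ* with 0 < δ* < δ such that for every subset Γ ⊆ ℝ^{2d} one has (Γ_{δ*})_{δ*} ⊆ Γ_δ and (ℝ^{2d} \ Γ_δ)_{δ*} ⊆ ℝ^{2d} \ Γ_{δ*}. -/
import Mathlib


/-!
STATEMENT 5: for every `δ ∈ (0,1)` there is `δ* ∈ (0,δ)` such that for every
`Γ ⊆ ℝ^{2d}` one has `(Γ_{δ*})_{δ*} ⊆ Γ_δ` and `(ℝ^{2d} \ Γ_δ)_{δ*} ⊆ ℝ^{2d} \ Γ_{δ*}`,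
where `Γ_δ = {z : |z − z₀| < δ⟨z₀⟩ for some z₀ ∈ Γ}`.
-/

open Real

noncomputable section

/-- The Japanese bracket `⟨z⟩ = (1 + |z|²)^{1/2}`. -/
def jap {n : ℕ} (z : EuclideanSpace ℝ (Fin n)) : ℝ := Real.sqrt (1 + ‖z‖ ^ 2)

/-- The `δ`-neighborhood `Γ_δ = {z : |z − z₀| < δ⟨z₀⟩ for some z₀ ∈ Γ}`. -/
def nbhd {n : ℕ} (Γ : Set (EuclideanSpace ℝ (Fin n))) (δ : ℝ) :
    Set (EuclideanSpace ℝ (Fin n)) :=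
  {z | ∃ z₀ ∈ Γ, ‖z - z₀‖ < δ * jap z₀}

lemma jap_pos {n : ℕ} (z : EuclideanSpace ℝ (Fin n)) : 0 < jap z := by
  unfold jap
  have : (0:ℝ) < 1 + ‖z‖ ^ 2 := by positivity
  exact Real.sqrt_pos.mpr this

lemma jap_lip {n : ℕ} (a b : EuclideanSpace ℝ (Fin n)) : jap a ≤ jap b + ‖a - b‖ := by
  have hna : ‖a‖ ≤ ‖b‖ + ‖a - b‖ := by
    have := norm_sub_norm_le a b
    linarith
  have hd : 0 ≤ ‖a - b‖ := norm_nonneg _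
  have hs0 : 0 ≤ jap b := (jap_pos b).le
  have hs : jap b ^ 2 = 1 + ‖b‖ ^ 2 := by
    unfold jap; rw [Real.sq_sqrt]; positivity
  have hbs : ‖b‖ ≤ jap b := by
    have h1 : ‖b‖ = Real.sqrt (‖b‖ ^ 2) := by
      rw [Real.sqrt_sq (norm_nonneg b)]
    rw [h1]
    exact Real.sqrt_le_sqrt (by linarith)
  have key : 1 + ‖a‖ ^ 2 ≤ (jap b + ‖a - b‖) ^ 2 := by
    nlinarith [norm_nonneg a, norm_nonneg b]
  calc jap a = Real.sqrt (1 + ‖a‖ ^ 2) := rfl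
    _ ≤ Real.sqrt ((jap b + ‖a - b‖) ^ 2) := Real.sqrt_le_sqrt key
    _ = jap b + ‖a - b‖ := Real.sqrt_sq (by positivity)

theorem statement5 (d : ℕ) (δ : ℝ) (hδ0 : 0 < δ) (hδ1 : δ < 1) :
    ∃ δs : ℝ, 0 < δs ∧ δs < δ ∧
      ∀ Γ : Set (EuclideanSpace ℝ (Fin (2 * d))),
        nbhd (nbhd Γ δs) δs ⊆ nbhd Γ δ ∧
        nbhd ((nbhd Γ δ)ᶜ) δs ⊆ (nbhd Γ δs)ᶜ := by
  refine ⟨δ / 3, by linarith, by linarith, fun Γ => ⟨?_, ?_⟩⟩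
  · rintro z ⟨z₁, ⟨z₀, hz₀, h10⟩, h1⟩
    refine ⟨z₀, hz₀, ?_⟩
    have hj0 := (jap_pos z₀).le
    have hjl : jap z₁ ≤ jap z₀ + ‖z₁ - z₀‖ := jap_lip z₁ z₀
    have htri : ‖z - z₀‖ ≤ ‖z - z₁‖ + ‖z₁ - z₀‖ := norm_sub_le_norm_sub_add_norm_sub z z₁ z₀
    nlinarith [norm_nonneg (z₁ - z₀), norm_nonneg (z - z₁)]
  · rintro z ⟨w, hw, hzw⟩ ⟨z₀, hz₀, hz0⟩
    apply hw
    refine ⟨z₀, hz₀, ?_⟩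
    have hj0 := (jap_pos z₀).le
    have hjl : jap w ≤ jap z₀ + ‖w - z₀‖ := jap_lip w z₀
    have htri : ‖w - z₀‖ ≤ ‖w - z‖ + ‖z - z₀‖ := norm_sub_le_norm_sub_add_norm_sub w z z₀
    have hwz : ‖w - z‖ = ‖z - w‖ := by rw [norm_sub_rev]
    nlinarith [norm_nonneg (w - z₀), norm_nonneg (z - w)]
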